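/- Suppose sequences m_n ⇀ m and h_n ⇀ h weakly in L²([0,T]×Ω; ℝᵈ), with weak limits |m|²̄ of |m_n|², |h|²̄ of |h_n|², and m·h̄ of m_n·h_n (in the sense of distributions / weak-* limits of L¹ functions, assumed to exist). If ∫(|h|²̄ + m·h̄) dx dt = ∫(|h|² + m·h) dx dt and ∫(|m|²̄ − |m|²)dx dt ≤ −c ∫((|m|²̄ − |m|²) + κ₀(|h|²̄ − |h|²)) dx dt for some c > 0, κ₀ > 0, then |m|²̄ = |m|² a.e., and consequently m_n → m strongly in L². -/

import Mathlib

open MeasureTheory Filter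

lemma integrable_inner_of_memL2
    {X : Type*} [MeasurableSpace X] {μ : Measure X}
    {E : Type*} [NormedAddCommGroup E] [InnerProductSpace ℝ E]
    {f g : X → E} (hf : MemLp f 2 μ) (hg : MemLp g 2 μ) :
    Integrable (fun x => (inner ℝ (f x) (g x) : ℝ)) μ := by
  have h1 := hf.norm.integrable_sq
  have h2 := hg.norm.integrable_sq
  have h3 := (hf.sub hg).norm.integrable_sq
  have heq : (fun x => (inner ℝ (f x) (g x) : ℝ)) =
      fun x => (‖f x‖ ^ 2 + ‖g x‖ ^ 2 - ‖f x - g x‖ ^ 2) / 2 := by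
    funext x
    rw [norm_sub_sq_real]
    ring
  rw [heq]
  exact ((h1.add h2).sub h3).div_const 2

/-- Convexity lower bound: the weak limit of `|fₙ|²` dominates `|f|²` a.e. -/
lemma ae_sq_le_weak_limit
    {X : Type*} [MeasurableSpace X] (μ : Measure X) [IsFiniteMeasure μ]
    {E : Type*} [NormedAddCommGroup E] [InnerProductSpace ℝ E]
    (fseq : ℕ → X → E) (f : X → E) (fb : X → ℝ)
    (hmem : ∀ n, MemLp (fseq n) 2 μ) (hf : MemLp f 2 μ)
    (hfbint : Integrable fb μ)
    (hweak : ∀ g : X → E, MemLp g 2 μ →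
      Tendsto (fun n => ∫ x, (inner ℝ (fseq n x) (g x) : ℝ) ∂μ) atTop
        (nhds (∫ x, (inner ℝ (f x) (g x) : ℝ) ∂μ)))
    (hweak2 : ∀ ψ : X → ℝ, Measurable ψ → (∃ C : ℝ, ∀ x, |ψ x| ≤ C) →
      Tendsto (fun n => ∫ x, ‖fseq n x‖ ^ 2 * ψ x ∂μ) atTop
        (nhds (∫ x, fb x * ψ x ∂μ))) :
    0 ≤ᵐ[μ] fun x => fb x - ‖f x‖ ^ 2 := by
  have hf2int : Integrable (fun x => ‖f x‖ ^ 2) μ := hf.norm.integrable_sq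
  apply ae_nonneg_of_forall_setIntegral_nonneg ((hfbint.sub hf2int))
  intro s hs _
  simp only [Pi.sub_apply]
  set ψ : X → ℝ := s.indicator (fun _ => 1) with hψdef
  have hψmeas : Measurable ψ := measurable_const.indicator hs
  have hψ01 : ∀ x, 0 ≤ ψ x ∧ ψ x ≤ 1 := by
    intro x
    by_cases hx : x ∈ s <;> simp [hψdef, Set.indicator_apply, hx]
  have hψbd : ∃ C : ℝ, ∀ x, |ψ x| ≤ C :=
    ⟨1, fun x => abs_le.2 ⟨by linarith [(hψ01 x).1], (hψ01 x).2⟩⟩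
  -- the test function g = ψ • f
  set g : X → E := fun x => ψ x • f x with hgdef
  have hψn : ∀ x, ‖ψ x‖ ≤ 1 := fun x => by
    rw [Real.norm_eq_abs]; exact abs_le.2 ⟨by linarith [(hψ01 x).1], (hψ01 x).2⟩
  have hgmem : MemLp g 2 μ := by
    apply MemLp.of_le_mul (c := 1) hf (hψmeas.aestronglyMeasurable.smul hf.1)
    filter_upwards with x
    have hnorm : ‖g x‖ = ‖ψ x‖ * ‖f x‖ := by
      have hx : g x = ψ x • f x := by rw [hgdef]
      rw [hx]
      exact norm_smul (ψ x) (f x)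
    rw [show (ψ • f) x = g x from rfl, hnorm]
    exact mul_le_mul_of_nonneg_right (hψn x) (norm_nonneg (f x))
  -- integrability facts
  have hinner_int : ∀ n, Integrable (fun x => (inner ℝ (fseq n x) (g x) : ℝ)) μ :=
    fun n => integrable_inner_of_memL2 (hmem n) hgmem
  have hfseq2ψ : ∀ n, Integrable (fun x => ‖fseq n x‖ ^ 2 * ψ x) μ := by
    intro n
    have h1 : Integrable (fun x => ψ x * ‖fseq n x‖ ^ 2) μ :=
      Integrable.bdd_mul (c := 1) ((hmem n).norm.integrable_sq)
        hψmeas.aestronglyMeasurable (Filter.Eventually.of_forall hψn)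
    exact h1.congr (Filter.Eventually.of_forall fun x => mul_comm _ _)
  have hf2ψ : Integrable (fun x => ‖f x‖ ^ 2 * ψ x) μ := by
    have h1 : Integrable (fun x => ψ x * ‖f x‖ ^ 2) μ :=
      Integrable.bdd_mul (c := 1) hf2int
        hψmeas.aestronglyMeasurable (Filter.Eventually.of_forall hψn)
    exact h1.congr (Filter.Eventually.of_forall fun x => mul_comm _ _)
  -- for each n, ∫ ‖fseq n‖²ψ - 2 ∫ ⟪fseq n, g⟫ + ∫ ‖f‖²ψ ≥ 0
  have key : ∀ n, 0 ≤ (∫ x, ‖fseq n x‖ ^ 2 * ψ x ∂μ)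
      - 2 * (∫ x, (inner ℝ (fseq n x) (g x) : ℝ) ∂μ) + ∫ x, ‖f x‖ ^ 2 * ψ x ∂μ := by
    intro n
    have hpt : ∀ x, 0 ≤ ‖fseq n x‖ ^ 2 * ψ x
        - 2 * (inner ℝ (fseq n x) (g x) : ℝ) + ‖f x‖ ^ 2 * ψ x := by
      intro x
      have h1 : (inner ℝ (fseq n x) (g x) : ℝ) = ψ x * (inner ℝ (fseq n x) (f x) : ℝ) := by
        rw [hgdef]; exact real_inner_smul_right _ _ _
      have h2 : ‖fseq n x - f x‖ ^ 2 = ‖fseq n x‖ ^ 2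
          - 2 * (inner ℝ (fseq n x) (f x) : ℝ) + ‖f x‖ ^ 2 := norm_sub_sq_real _ _
      have h3 : 0 ≤ ‖fseq n x - f x‖ ^ 2 * ψ x :=
        mul_nonneg (sq_nonneg _) (hψ01 x).1
      have h5 : ‖fseq n x - f x‖ ^ 2 * ψ x
          = ‖fseq n x‖ ^ 2 * ψ x - 2 * (inner ℝ (fseq n x) (g x) : ℝ)
            + ‖f x‖ ^ 2 * ψ x := by
        rw [h2, h1]; ring
      rw [← h5]
      exact h3
    have hInt : 0 ≤ ∫ x, (‖fseq n x‖ ^ 2 * ψ x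
        - 2 * (inner ℝ (fseq n x) (g x) : ℝ) + ‖f x‖ ^ 2 * ψ x) ∂μ :=
      integral_nonneg hpt
    have hsub : Integrable (fun x => ‖fseq n x‖ ^ 2 * ψ x
        - 2 * (inner ℝ (fseq n x) (g x) : ℝ)) μ :=
      (hfseq2ψ n).sub ((hinner_int n).const_mul 2)
    rwa [integral_add hsub hf2ψ,
      integral_sub (hfseq2ψ n) ((hinner_int n).const_mul 2), integral_const_mul] at hInt
  -- pass to the limit
  have hlim1 := hweak2 ψ hψmeas hψbd
  have hlim2 := hweak g hgmem
  have hgf : (∫ x, (inner ℝ (f x) (g x) : ℝ) ∂μ) = ∫ x, ‖f x‖ ^ 2 * ψ x ∂μ := by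
    apply integral_congr_ae
    filter_upwards with x
    rw [hgdef]
    rw [real_inner_smul_right, real_inner_self_eq_norm_sq]
    ring
  have hlim : Tendsto (fun n => (∫ x, ‖fseq n x‖ ^ 2 * ψ x ∂μ)
      - 2 * (∫ x, (inner ℝ (fseq n x) (g x) : ℝ) ∂μ) + ∫ x, ‖f x‖ ^ 2 * ψ x ∂μ) atTop
      (nhds ((∫ x, fb x * ψ x ∂μ) - 2 * (∫ x, ‖f x‖ ^ 2 * ψ x ∂μ)
        + ∫ x, ‖f x‖ ^ 2 * ψ x ∂μ)) := by
    refine Tendsto.add ?_ tendsto_const_nhds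
    refine hlim1.sub ?_
    rw [hgf] at hlim2
    exact hlim2.const_mul 2
  have hfinal : 0 ≤ (∫ x, fb x * ψ x ∂μ) - 2 * (∫ x, ‖f x‖ ^ 2 * ψ x ∂μ)
      + ∫ x, ‖f x‖ ^ 2 * ψ x ∂μ := ge_of_tendsto hlim (Eventually.of_forall key)
  -- conclude
  have hset : (∫ x in s, (fb x - ‖f x‖ ^ 2) ∂μ)
      = (∫ x, fb x * ψ x ∂μ) - ∫ x, ‖f x‖ ^ 2 * ψ x ∂μ := by
    have hfbψ : Integrable (fun x => fb x * ψ x) μ := by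
      have h1 : Integrable (fun x => ψ x * fb x) μ :=
        Integrable.bdd_mul (c := 1) hfbint
          hψmeas.aestronglyMeasurable (Filter.Eventually.of_forall hψn)
      exact h1.congr (Filter.Eventually.of_forall fun x => mul_comm _ _)
    rw [← integral_sub hfbψ hf2ψ, ← integral_indicator hs]
    apply integral_congr_ae
    filter_upwards with x
    by_cases hx : x ∈ s <;> simp [hψdef, Set.indicator_apply, hx]
  rw [hset]
  linarith

/-- Weak compactness argument: if the weak limits of `|mₙ|²`, `|hₙ|²`, `mₙ·hₙ` satisfy
`∫(|h|²̄ + m·h̄) = ∫(|h|² + m·h)` and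
`∫(|m|²̄ − |m|²) ≤ −c ∫((|m|²̄ − |m|²) + κ₀(|h|²̄ − |h|²))`, then `|m|²̄ = |m|²` a.e.
and `mₙ → m` strongly in `L²`. -/
theorem weak_limit_squares_strong_convergence
    {X : Type*} [MeasurableSpace X] (μ : Measure X) [IsFiniteMeasure μ]
    {E : Type*} [NormedAddCommGroup E] [InnerProductSpace ℝ E]
    (c κ₀ : ℝ) (hc : 0 < c) (hκ₀ : 0 < κ₀)
    (mseq hseq : ℕ → X → E) (m h : X → E) (mb hb mhb : X → ℝ)
    (hmem : ∀ n, MemLp (mseq n) 2 μ ∧ MemLp (hseq n) 2 μ)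
    (hm : MemLp m 2 μ) (hh : MemLp h 2 μ)
    (hmbint : Integrable mb μ) (hhbint : Integrable hb μ) (hmhbint : Integrable mhb μ)
    (hweakm : ∀ g : X → E, MemLp g 2 μ →
      Tendsto (fun n => ∫ x, (inner ℝ (mseq n x) (g x) : ℝ) ∂μ) atTop
        (nhds (∫ x, (inner ℝ (m x) (g x) : ℝ) ∂μ)))
    (hweakh : ∀ g : X → E, MemLp g 2 μ →
      Tendsto (fun n => ∫ x, (inner ℝ (hseq n x) (g x) : ℝ) ∂μ) atTop
        (nhds (∫ x, (inner ℝ (h x) (g x) : ℝ) ∂μ)))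
    (hweakm2 : ∀ ψ : X → ℝ, Measurable ψ → (∃ C : ℝ, ∀ x, |ψ x| ≤ C) →
      Tendsto (fun n => ∫ x, ‖mseq n x‖ ^ 2 * ψ x ∂μ) atTop
        (nhds (∫ x, mb x * ψ x ∂μ)))
    (hweakh2 : ∀ ψ : X → ℝ, Measurable ψ → (∃ C : ℝ, ∀ x, |ψ x| ≤ C) →
      Tendsto (fun n => ∫ x, ‖hseq n x‖ ^ 2 * ψ x ∂μ) atTop
        (nhds (∫ x, hb x * ψ x ∂μ)))
    (hweakmh : ∀ ψ : X → ℝ, Measurable ψ → (∃ C : ℝ, ∀ x, |ψ x| ≤ C) →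
      Tendsto (fun n => ∫ x, (inner ℝ (mseq n x) (hseq n x) : ℝ) * ψ x ∂μ) atTop
        (nhds (∫ x, mhb x * ψ x ∂μ)))
    (hid : (∫ x, (hb x + mhb x) ∂μ) =
      ∫ x, (‖h x‖ ^ 2 + (inner ℝ (m x) (h x) : ℝ)) ∂μ)
    (hineq : (∫ x, (mb x - ‖m x‖ ^ 2) ∂μ) ≤
      -c * ∫ x, ((mb x - ‖m x‖ ^ 2) + κ₀ * (hb x - ‖h x‖ ^ 2)) ∂μ) :
    (∀ᵐ x ∂μ, mb x = ‖m x‖ ^ 2) ∧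
    Tendsto (fun n => ∫ x, ‖mseq n x - m x‖ ^ 2 ∂μ) atTop (nhds 0) := by
  have hm2int : Integrable (fun x => ‖m x‖ ^ 2) μ := hm.norm.integrable_sq
  have hh2int : Integrable (fun x => ‖h x‖ ^ 2) μ := hh.norm.integrable_sq
  -- a.e. lower bounds from convexity
  have hmae : 0 ≤ᵐ[μ] fun x => mb x - ‖m x‖ ^ 2 :=
    ae_sq_le_weak_limit μ mseq m mb (fun n => (hmem n).1) hm hmbint hweakm hweakm2
  have hhae : 0 ≤ᵐ[μ] fun x => hb x - ‖h x‖ ^ 2 :=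
    ae_sq_le_weak_limit μ hseq h hb (fun n => (hmem n).2) hh hhbint hweakh hweakh2
  set A := ∫ x, (mb x - ‖m x‖ ^ 2) ∂μ with hA
  set B := ∫ x, (hb x - ‖h x‖ ^ 2) ∂μ with hB
  have hAint : Integrable (fun x => mb x - ‖m x‖ ^ 2) μ := hmbint.sub hm2int
  have hBint : Integrable (fun x => hb x - ‖h x‖ ^ 2) μ := hhbint.sub hh2int
  have hA0 : 0 ≤ A := integral_nonneg_of_ae hmae
  have hB0 : 0 ≤ B := integral_nonneg_of_ae hhae
  have hsplit : (∫ x, ((mb x - ‖m x‖ ^ 2) + κ₀ * (hb x - ‖h x‖ ^ 2)) ∂μ)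
      = A + κ₀ * B := by
    rw [integral_add hAint (hBint.const_mul κ₀), integral_const_mul]
  rw [hsplit] at hineq
  have hAle : A ≤ 0 := by
    nlinarith [mul_nonneg (mul_nonneg hc.le hκ₀.le) hB0, mul_nonneg hc.le hA0]
  have hAzero : A = 0 := le_antisymm hAle hA0
  have hae_eq : (fun x => mb x - ‖m x‖ ^ 2) =ᵐ[μ] 0 :=
    (integral_eq_zero_iff_of_nonneg_ae hmae hAint).1 (by rw [← hA]; exact hAzero)
  have part1 : ∀ᵐ x ∂μ, mb x = ‖m x‖ ^ 2 := by
    filter_upwards [hae_eq] with x hx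
    have : mb x - ‖m x‖ ^ 2 = 0 := hx
    linarith
  refine ⟨part1, ?_⟩
  -- strong convergence
  have hEq : (∫ x, mb x ∂μ) = ∫ x, ‖m x‖ ^ 2 ∂μ :=
    integral_congr_ae part1
  have hone : Tendsto (fun n => ∫ x, ‖mseq n x‖ ^ 2 ∂μ) atTop
      (nhds (∫ x, mb x ∂μ)) := by
    have := hweakm2 (fun _ => 1) measurable_const ⟨1, fun x => by norm_num⟩
    simpa using this
  have hinnerlim : Tendsto (fun n => ∫ x, (inner ℝ (mseq n x) (m x) : ℝ) ∂μ) atTop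
      (nhds (∫ x, ‖m x‖ ^ 2 ∂μ)) := by
    have := hweakm m hm
    have heq2 : (∫ x, (inner ℝ (m x) (m x) : ℝ) ∂μ) = ∫ x, ‖m x‖ ^ 2 ∂μ :=
      integral_congr_ae (by filter_upwards with x using real_inner_self_eq_norm_sq _)
    rwa [heq2] at this
  have hexpand : ∀ n, (∫ x, ‖mseq n x - m x‖ ^ 2 ∂μ)
      = (∫ x, ‖mseq n x‖ ^ 2 ∂μ) - 2 * (∫ x, (inner ℝ (mseq n x) (m x) : ℝ) ∂μ)
        + ∫ x, ‖m x‖ ^ 2 ∂μ := by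
    intro n
    have hi : Integrable (fun x => (inner ℝ (mseq n x) (m x) : ℝ)) μ :=
      integrable_inner_of_memL2 (hmem n).1 hm
    have hn2 : Integrable (fun x => ‖mseq n x‖ ^ 2) μ := (hmem n).1.norm.integrable_sq
    have hsub : Integrable (fun x => ‖mseq n x‖ ^ 2
        - 2 * (inner ℝ (mseq n x) (m x) : ℝ)) μ := hn2.sub (hi.const_mul 2)
    rw [← integral_const_mul, ← integral_sub hn2 (hi.const_mul 2),
      ← integral_add hsub hm2int]
    apply integral_congr_ae
    filter_upwards with x
    rw [norm_sub_sq_real]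
  have : Tendsto (fun n => (∫ x, ‖mseq n x‖ ^ 2 ∂μ)
      - 2 * (∫ x, (inner ℝ (mseq n x) (m x) : ℝ) ∂μ) + ∫ x, ‖m x‖ ^ 2 ∂μ) atTop
      (nhds ((∫ x, mb x ∂μ) - 2 * (∫ x, ‖m x‖ ^ 2 ∂μ) + ∫ x, ‖m x‖ ^ 2 ∂μ)) :=
    (hone.sub (hinnerlim.const_mul 2)).add tendsto_const_nhds
  have hzero : (∫ x, mb x ∂μ) - 2 * (∫ x, ‖m x‖ ^ 2 ∂μ) + ∫ x, ‖m x‖ ^ 2 ∂μ = 0 := by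
    rw [hEq]; ring
  rw [hzero] at this
  exact this.congr (fun n => (hexpand n).symm)
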